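/- Let D, D' ∈ H⁴ be such that there exist g, g' ∈ SO(3) and real numbers λ₁, λ₂, λ₃ and λ'₁, λ'₂, λ'₃ with g·D = NF_orth(λ₁, λ₂, λ₃) and g'·D' = NF_orth(λ'₁, λ'₂, λ'₃), and suppose both D and D' satisfy 6J₆ − 9J₂J₄ − 20J₃² + 3J₂³ ≠ 0. If Jₖ(D) = Jₖ(D') for k = 2, 3, 4, 5, 6, 7, then there exists h ∈ SO(3) with D' = h·D. (The invariants J₂, …, J₇ separate the orbits inside the orthotropic class.) -/
import Mathlib


open Matrix BigOperators

abbrev Mat3 := Matrix (Fin 3) (Fin 3) ℝ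
abbrev T4 := Fin 3 → Fin 3 → Fin 3 → Fin 3 → ℝ

/-- `g ∈ SO(3)`: real orthogonal 3×3 matrix of determinant 1. -/
def IsSO3 (g : Mat3) : Prop := g * gᵀ = 1 ∧ g.det = 1

/-- A harmonic fourth-order tensor: totally symmetric and traceless. -/
def IsHarm (D : T4) : Prop :=
  (∀ i j k l, D i j k l = D j i k l) ∧
  (∀ i j k l, D i j k l = D i k j l) ∧
  (∀ i j k l, D i j k l = D i j l k) ∧
  (∀ i j, ∑ k, D k k i j = 0)

/-- The action of a rotation `g` on a fourth-order tensor. -/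
noncomputable def act (g : Mat3) (D : T4) : T4 := fun i j k l =>
  ∑ p, ∑ q, ∑ r, ∑ s, g i p * g j q * g k r * g l s * D p q r s

/-- `D²`, the square of a fourth-order tensor. -/
noncomputable def sqT (D : T4) : T4 := fun i j k l => ∑ p, ∑ q, D i j p q * D p q k l

/-- `D³`, the cube of a fourth-order tensor. -/
noncomputable def cbT (D : T4) : T4 := fun i j k l => ∑ p, ∑ q, sqT D i j p q * D p q k l

/-- The second-order Boehler covariant `d₂(D) j l = ∑ᵢ (D²) i j i l`. -/
noncomputable def d2 (D : T4) : Mat3 := Matrix.of fun j l => ∑ i, sqT D i j i l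

/-- The second-order covariant `d₃(D) j l = ∑ᵢ (D³) i j i l`. -/
noncomputable def d3 (D : T4) : Mat3 := Matrix.of fun j l => ∑ i, cbT D i j i l

/-- Fundamental invariant `J₂ = tr d₂`. -/
noncomputable def J2 (D : T4) : ℝ := (d2 D).trace
/-- Fundamental invariant `J₃ = tr d₃`. -/
noncomputable def J3 (D : T4) : ℝ := (d3 D).trace
/-- Fundamental invariant `J₄ = tr(d₂²)`. -/
noncomputable def J4 (D : T4) : ℝ := (d2 D * d2 D).trace
/-- Fundamental invariant `J₅ = ∑ (d₂)ᵢⱼ D i j k l (d₂)ₖₗ`. -/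
noncomputable def J5 (D : T4) : ℝ :=
  ∑ i, ∑ j, ∑ k, ∑ l, d2 D i j * D i j k l * d2 D k l
/-- Fundamental invariant `J₆ = tr(d₂³)`. -/
noncomputable def J6 (D : T4) : ℝ := (d2 D * d2 D * d2 D).trace
/-- Fundamental invariant `J₇ = ∑ (d₂²)ᵢⱼ D i j k l (d₂)ₖₗ`. -/
noncomputable def J7 (D : T4) : ℝ :=
  ∑ i, ∑ j, ∑ k, ∑ l, (d2 D * d2 D) i j * D i j k l * d2 D k l
/-- Fundamental invariant `J₈ = ∑ (d₂²)ᵢⱼ (D²) i j k l (d₂)ₖₗ`. -/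
noncomputable def J8 (D : T4) : ℝ :=
  ∑ i, ∑ j, ∑ k, ∑ l, (d2 D * d2 D) i j * sqT D i j k l * d2 D k l
/-- Fundamental invariant `J₉ = ∑ (d₂²)ᵢⱼ D i j k l (d₂²)ₖₗ`. -/
noncomputable def J9 (D : T4) : ℝ :=
  ∑ i, ∑ j, ∑ k, ∑ l, (d2 D * d2 D) i j * D i j k l * (d2 D * d2 D) k l
/-- Fundamental invariant `J₁₀ = ∑ (d₂²)ᵢⱼ (D²) i j k l (d₂²)ₖₗ`. -/
noncomputable def J10 (D : T4) : ℝ :=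
  ∑ i, ∑ j, ∑ k, ∑ l, (d2 D * d2 D) i j * sqT D i j k l * (d2 D * d2 D) k l

/-- The totally symmetric tensor whose value at `(i,j,k,l)` depends only on the
multiset of indices `{i,j,k,l}`. -/
noncomputable def symT (f : Multiset (Fin 3) → ℝ) : T4 := fun i j k l => f {i, j, k, l}

/-- Normal form of a cubic (`[𝕆]`) tensor in `H⁴` with parameter `δ`
(indices `0,1,2` correspond to `1,2,3`). -/
noncomputable def NFcubic (δ : ℝ) : T4 := symT fun m =>
  if m = {0, 0, 0, 0} ∨ m = {1, 1, 1, 1} ∨ m = {2, 2, 2, 2} then 8 * δ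
  else if m = {0, 0, 1, 1} ∨ m = {0, 0, 2, 2} ∨ m = {1, 1, 2, 2} then -(4 * δ)
  else 0

/-- Normal form of a transversely isotropic (`[O(2)]`) tensor in `H⁴` with parameter `δ`. -/
noncomputable def NFti (δ : ℝ) : T4 := symT fun m =>
  if m = {0, 0, 0, 0} ∨ m = {1, 1, 1, 1} then 3 * δ
  else if m = {2, 2, 2, 2} then 8 * δ
  else if m = {0, 0, 1, 1} then δ
  else if m = {0, 0, 2, 2} ∨ m = {1, 1, 2, 2} then -(4 * δ)
  else 0

/-- Normal form of a trigonal (`[𝔻₃]`) tensor in `H⁴` with parameters `δ, σ`. -/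
noncomputable def NFtrig (δ σ : ℝ) : T4 := symT fun m =>
  if m = {0, 0, 0, 0} ∨ m = {1, 1, 1, 1} then 3 * δ
  else if m = {2, 2, 2, 2} then 8 * δ
  else if m = {0, 0, 1, 1} then δ
  else if m = {0, 0, 2, 2} ∨ m = {1, 1, 2, 2} then -(4 * δ)
  else if m = {0, 0, 1, 2} then -σ
  else if m = {1, 1, 1, 2} then σ
  else 0

/-- Normal form of a tetragonal (`[𝔻₄]`) tensor in `H⁴` with parameters `δ, σ`. -/
noncomputable def NFtetra (δ σ : ℝ) : T4 := symT fun m =>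
  if m = {0, 0, 0, 0} ∨ m = {1, 1, 1, 1} then 3 * δ - σ
  else if m = {2, 2, 2, 2} then 8 * δ
  else if m = {0, 0, 1, 1} then δ + σ
  else if m = {0, 0, 2, 2} ∨ m = {1, 1, 2, 2} then -(4 * δ)
  else 0

/-- Normal form of an orthotropic (`[𝔻₂]`) tensor in `H⁴` with parameters `λ₁, λ₂, λ₃`. -/
noncomputable def NForth (l1 l2 l3 : ℝ) : T4 := symT fun m =>
  if m = {0, 0, 0, 0} then -l2 - l3
  else if m = {1, 1, 1, 1} then -l1 - l3
  else if m = {2, 2, 2, 2} then -l1 - l2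
  else if m = {0, 0, 1, 1} then l3
  else if m = {0, 0, 2, 2} then l2
  else if m = {1, 1, 2, 2} then l1
  else 0
noncomputable def nfv (l1 l2 l3 : ℝ) : T4 :=
  ![![![![(-l3 - l2), 0, 0], ![0, (l3), 0], ![0, 0, (l2)]], ![![0, (l3), 0], ![(l3), 0, 0], ![0, 0, 0]], ![![0, 0, (l2)], ![0, 0, 0], ![(l2), 0, 0]]], ![![![0, (l3), 0], ![(l3), 0, 0], ![0, 0, 0]], ![![(l3), 0, 0], ![0, (-l3 - l1), 0], ![0, 0, (l1)]], ![![0, 0, 0], ![0, 0, (l1)], ![0, (l1), 0]]], ![![![0, 0, (l2)], ![0, 0, 0], ![(l2), 0, 0]], ![![0, 0, 0], ![0, 0, (l1)], ![0, (l1), 0]], ![![(l2), 0, 0], ![0, (l1), 0], ![0, 0, (-l2 - l1)]]]]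

noncomputable def sqv (l1 l2 l3 : ℝ) : T4 :=
  ![![![![(2*l3^2 + 2*l2*l3 + 2*l2^2), 0, 0], ![0, (-2*l3^2 - l2*l3 - l1*l3 + l1*l2), 0], ![0, 0, (-l2*l3 - 2*l2^2 + l1*l3 - l1*l2)]], ![![0, (2*l3^2), 0], ![(2*l3^2), 0, 0], ![0, 0, 0]], ![![0, 0, (2*l2^2)], ![0, 0, 0], ![(2*l2^2), 0, 0]]], ![![![0, (2*l3^2), 0], ![(2*l3^2), 0, 0], ![0, 0, 0]], ![![(-2*l3^2 - l2*l3 - l1*l3 + l1*l2), 0, 0], ![0, (2*l3^2 + 2*l1*l3 + 2*l1^2), 0], ![0, 0, (l2*l3 - l1*l3 - l1*l2 - 2*l1^2)]], ![![0, 0, 0], ![0, 0, (2*l1^2)], ![0, (2*l1^2), 0]]], ![![![0, 0, (2*l2^2)], ![0, 0, 0], ![(2*l2^2), 0, 0]], ![![0, 0, 0], ![0, 0, (2*l1^2)], ![0, (2*l1^2), 0]], ![![(-l2*l3 - 2*l2^2 + l1*l3 - l1*l2), 0, 0], ![0, (l2*l3 - l1*l3 - l1*l2 - 2*l1^2), 0],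 ![0, 0, (2*l2^2 + 2*l1*l2 + 2*l1^2)]]]]

-- d2 diag: (4*l3^2 + 2*l2*l3 + 4*l2^2), (4*l3^2 + 2*l1*l3 + 4*l1^2), (4*l2^2 + 2*l1*l2 + 4*l1^2)
lemma nf_eq (l1 l2 l3 : ℝ) : NForth l1 l2 l3 = nfv l1 l2 l3 := by
  funext i j k l
  fin_cases i <;> fin_cases j <;> fin_cases k <;> fin_cases l <;>
    simp (config := { decide := true }) [NForth, symT, nfv, Matrix.vecHead, Matrix.vecTail] <;> ring

set_option maxHeartbeats 1000000 in
lemma sq_eq (l1 l2 l3 : ℝ) : sqT (nfv l1 l2 l3) = sqv l1 l2 l3 := by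
  funext i j k l
  fin_cases i <;> fin_cases j <;> fin_cases k <;> fin_cases l <;>
    (simp [sqT, nfv, sqv, Fin.sum_univ_three, Matrix.vecHead, Matrix.vecTail]; try ring)
section Inv
variable (g : Mat3)

lemma sum_mul_eq_trace (X Y : Mat3) : ∑ i, ∑ j, X i j * Y i j = (X * Yᵀ).trace := by
  simp [Matrix.trace, Matrix.mul_apply, Matrix.diag, Fin.sum_univ_three]

lemma sepTraceConj (hg : gᵀ * g = 1) (A : Mat3) : (g * A * gᵀ).trace = A.trace := by
  rw [Matrix.trace_mul_cycle, hg, Matrix.one_mul]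

lemma sepConjMul (hg : gᵀ * g = 1) (A B : Mat3) :
    (g * A * gᵀ) * (g * B * gᵀ) = g * (A * B) * gᵀ := by
  calc (g * A * gᵀ) * (g * B * gᵀ) = g * A * (gᵀ * g) * (B * gᵀ) := by
        simp only [Matrix.mul_assoc]
    _ = g * (A * B) * gᵀ := by rw [hg]; simp only [Matrix.mul_one, Matrix.mul_assoc]

lemma sepConjPair (hg : gᵀ * g = 1) (A B : Mat3) :
    ∑ i, ∑ j, (g * A * gᵀ) i j * (g * B * gᵀ) i j = ∑ i, ∑ j, A i j * B i j := by
  rw [sum_mul_eq_trace, sum_mul_eq_trace]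
  have hBt : (g * B * gᵀ)ᵀ = g * Bᵀ * gᵀ := by
    rw [Matrix.transpose_mul, Matrix.transpose_mul, Matrix.transpose_transpose,
      Matrix.mul_assoc]
  rw [hBt, sepConjMul g hg, sepTraceConj g hg]

lemma slice12' (D : T4) (i j p q : Fin 3) :
    act g D i j p q =
      (g * Matrix.of (fun c d => ∑ a, ∑ b, g i a * g j b * D a b c d) * gᵀ) p q := by
  simp [act, Matrix.mul_apply, Fin.sum_univ_three]; ring

lemma slice34' (D : T4) (k l p q : Fin 3) :
    act g D p q k l =
      (g * Matrix.of (fun a b => ∑ c, ∑ d, g k c * g l d * D a b c d) * gᵀ) p q := by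
  simp [act, Matrix.mul_apply, Fin.sum_univ_three]; ring

lemma slice13' (D : T4) (j l p q : Fin 3) :
    act g D p j q l =
      (g * Matrix.of (fun a c => ∑ b, ∑ d, g j b * g l d * D a b c d) * gᵀ) p q := by
  simp [act, Matrix.mul_apply, Fin.sum_univ_three]; ring

lemma contr_act (hg : gᵀ * g = 1) (S T : T4) (i j k l : Fin 3) :
    ∑ p, ∑ q, act g S i j p q * act g T p q k l
      = act g (fun i j k l => ∑ p, ∑ q, S i j p q * T p q k l) i j k l := by
  calc ∑ p, ∑ q, act g S i j p q * act g T p q k l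
      = ∑ p, ∑ q, (g * Matrix.of (fun c d => ∑ a, ∑ b, g i a * g j b * S a b c d) * gᵀ) p q
          * (g * Matrix.of (fun a b => ∑ c, ∑ d, g k c * g l d * T a b c d) * gᵀ) p q := by
        simp only [slice12' g S i j, slice34' g T k l]
    _ = ∑ p, ∑ q, (Matrix.of (fun c d => ∑ a, ∑ b, g i a * g j b * S a b c d)) p q
          * (Matrix.of (fun a b => ∑ c, ∑ d, g k c * g l d * T a b c d)) p q :=
        sepConjPair g hg _ _
    _ = act g (fun i j k l => ∑ p, ∑ q, S i j p q * T p q k l) i j k l := by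
        simp [act, Fin.sum_univ_three]; ring

end Inv
noncomputable def act1 (g : Mat3) (D : T4) : T4 := fun i j k l => ∑ p, g i p * D p j k l
noncomputable def act2 (g : Mat3) (D : T4) : T4 := fun i j k l => ∑ p, g j p * D i p k l
noncomputable def act3 (g : Mat3) (D : T4) : T4 := fun i j k l => ∑ p, g k p * D i j p l
noncomputable def act4 (g : Mat3) (D : T4) : T4 := fun i j k l => ∑ p, g l p * D i j k p

lemma act_eq_slots (g : Mat3) (D : T4) : act g D = act1 g (act2 g (act3 g (act4 g D))) := by
  funext i j k l
  simp only [act, act1, act2, act3, act4, Fin.sum_univ_three]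
  ring

lemma act1_comp (a b : Mat3) (D : T4) : act1 a (act1 b D) = act1 (a * b) D := by
  funext i j k l; simp only [act1, Matrix.mul_apply, Fin.sum_univ_three]; ring
lemma act2_comp (a b : Mat3) (D : T4) : act2 a (act2 b D) = act2 (a * b) D := by
  funext i j k l; simp only [act2, Matrix.mul_apply, Fin.sum_univ_three]; ring
lemma act3_comp (a b : Mat3) (D : T4) : act3 a (act3 b D) = act3 (a * b) D := by
  funext i j k l; simp only [act3, Matrix.mul_apply, Fin.sum_univ_three]; ring
lemma act4_comp (a b : Mat3) (D : T4) : act4 a (act4 b D) = act4 (a * b) D := by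
  funext i j k l; simp only [act4, Matrix.mul_apply, Fin.sum_univ_three]; ring

lemma act12 (a b : Mat3) (D : T4) : act1 a (act2 b D) = act2 b (act1 a D) := by
  funext i j k l; simp only [act1, act2, Fin.sum_univ_three]; ring
lemma act13 (a b : Mat3) (D : T4) : act1 a (act3 b D) = act3 b (act1 a D) := by
  funext i j k l; simp only [act1, act3, Fin.sum_univ_three]; ring
lemma act14 (a b : Mat3) (D : T4) : act1 a (act4 b D) = act4 b (act1 a D) := by
  funext i j k l; simp only [act1, act4, Fin.sum_univ_three]; ring
lemma act23 (a b : Mat3) (D : T4) : act2 a (act3 b D) = act3 b (act2 a D) := by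
  funext i j k l; simp only [act2, act3, Fin.sum_univ_three]; ring
lemma act24 (a b : Mat3) (D : T4) : act2 a (act4 b D) = act4 b (act2 a D) := by
  funext i j k l; simp only [act2, act4, Fin.sum_univ_three]; ring
lemma act34 (a b : Mat3) (D : T4) : act3 a (act4 b D) = act4 b (act3 a D) := by
  funext i j k l; simp only [act3, act4, Fin.sum_univ_three]; ring

lemma sep_act_one (D : T4) : act (1 : Mat3) D = D := by
  funext i j k l; simp [act, Matrix.one_apply]

lemma sep_act_comp (a b : Mat3) (D : T4) : act a (act b D) = act (a * b) D := by
  rw [act_eq_slots a, act_eq_slots b, act_eq_slots (a*b)]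
  rw [show act4 a (act1 b (act2 b (act3 b (act4 b D))))
      = act1 b (act2 b (act3 b (act4 a (act4 b D)))) by rw [← act14 b a, ← act24 b a, ← act34 b a]]
  rw [act4_comp]
  rw [show act3 a (act1 b (act2 b (act3 b (act4 (a*b) D))))
      = act1 b (act2 b (act3 a (act3 b (act4 (a*b) D)))) by rw [← act13 b a, ← act23 b a]]
  rw [act3_comp]
  rw [show act2 a (act1 b (act2 b (act3 (a*b) (act4 (a*b) D))))
      = act1 b (act2 a (act2 b (act3 (a*b) (act4 (a*b) D)))) by rw [← act12 b a]]
  rw [act2_comp, act1_comp]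
section Inv3
variable (g : Mat3)

lemma sep_sqT_act (hg : gᵀ * g = 1) (D : T4) : sqT (act g D) = act g (sqT D) := by
  funext i j k l
  exact contr_act g hg D D i j k l

lemma sep_cbT_act (hg : gᵀ * g = 1) (D : T4) : cbT (act g D) = act g (cbT D) := by
  funext i j k l
  show ∑ p, ∑ q, sqT (act g D) i j p q * act g D p q k l = _
  rw [sep_sqT_act g hg D]
  exact contr_act g hg (sqT D) D i j k l

lemma sep_ptrace (hg : gᵀ * g = 1) (S : T4) :
    (Matrix.of fun j l => ∑ i, act g S i j i l)
      = g * (Matrix.of fun b d => ∑ a, S a b a d) * gᵀ := by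
  ext j l
  calc ∑ i, act g S i j i l
      = (g * Matrix.of (fun a c => ∑ b, ∑ d, g j b * g l d * S a b c d) * gᵀ).trace := by
        simp only [Matrix.trace, Matrix.diag, slice13' g S j l]
    _ = (Matrix.of (fun a c => ∑ b, ∑ d, g j b * g l d * S a b c d)).trace :=
        sepTraceConj g hg _
    _ = (g * (Matrix.of fun b d => ∑ a, S a b a d) * gᵀ) j l := by
        simp [Matrix.trace, Matrix.diag, Matrix.mul_apply, Fin.sum_univ_three]
        ring

lemma sep_d2_act (hg : gᵀ * g = 1) (D : T4) : d2 (act g D) = g * d2 D * gᵀ := by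
  show (Matrix.of fun j l => ∑ i, sqT (act g D) i j i l) = _
  rw [sep_sqT_act g hg D]
  exact sep_ptrace g hg (sqT D)

lemma sep_d3_act (hg : gᵀ * g = 1) (D : T4) : d3 (act g D) = g * d3 D * gᵀ := by
  show (Matrix.of fun j l => ∑ i, cbT (act g D) i j i l) = _
  rw [sep_cbT_act g hg D]
  exact sep_ptrace g hg (cbT D)

lemma sep_J2_act (hg : gᵀ * g = 1) (D : T4) : J2 (act g D) = J2 D := by
  rw [J2, J2, sep_d2_act g hg, sepTraceConj g hg]

lemma sep_J3_act (hg : gᵀ * g = 1) (D : T4) : J3 (act g D) = J3 D := by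
  rw [J3, J3, sep_d3_act g hg, sepTraceConj g hg]

lemma sep_J4_act (hg : gᵀ * g = 1) (D : T4) : J4 (act g D) = J4 D := by
  rw [J4, J4, sep_d2_act g hg, sepConjMul g hg, sepTraceConj g hg]

lemma sep_J6_act (hg : gᵀ * g = 1) (D : T4) : J6 (act g D) = J6 D := by
  rw [J6, J6, sep_d2_act g hg, sepConjMul g hg, sepConjMul g hg, sepTraceConj g hg]

lemma sep_pairing (hg : gᵀ * g = 1) (D : T4) (P Q : Mat3) :
    ∑ i, ∑ j, ∑ k, ∑ l, (g * P * gᵀ) i j * act g D i j k l * (g * Q * gᵀ) k l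
      = ∑ i, ∑ j, ∑ k, ∑ l, P i j * D i j k l * Q k l := by
  have step1 : ∀ (X : T4) (A B : Mat3),
      ∑ i, ∑ j, ∑ k, ∑ l, A i j * X i j k l * B k l
        = ∑ i, ∑ j, A i j * (∑ k, ∑ l, X i j k l * B k l) := by
    intro X A B
    refine Finset.sum_congr rfl fun i _ => Finset.sum_congr rfl fun j _ => ?_
    rw [Finset.mul_sum]
    refine Finset.sum_congr rfl fun k _ => ?_
    rw [Finset.mul_sum]
    refine Finset.sum_congr rfl fun l _ => ?_
    ring
  rw [step1, step1]
  have inner : ∀ i j, (∑ k, ∑ l, act g D i j k l * (g * Q * gᵀ) k l)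
      = (g * (Matrix.of fun a b => ∑ c, ∑ d, D a b c d * Q c d) * gᵀ) i j := by
    intro i j
    calc ∑ k, ∑ l, act g D i j k l * (g * Q * gᵀ) k l
        = ∑ k, ∑ l, (g * Matrix.of (fun c d => ∑ a, ∑ b, g i a * g j b * D a b c d) * gᵀ) k l
            * (g * Q * gᵀ) k l := by simp only [slice12' g D i j]
      _ = ∑ k, ∑ l, (Matrix.of (fun c d => ∑ a, ∑ b, g i a * g j b * D a b c d)) k l * Q k l :=
          sepConjPair g hg _ _
      _ = (g * (Matrix.of fun a b => ∑ c, ∑ d, D a b c d * Q c d) * gᵀ) i j := by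
          simp [Matrix.mul_apply, Fin.sum_univ_three]
          ring
  simp only [inner]
  rw [sepConjPair g hg]
  simp [Matrix.mul_apply, Fin.sum_univ_three]

lemma sep_J5_act (hg : gᵀ * g = 1) (D : T4) : J5 (act g D) = J5 D := by
  rw [J5, J5]
  simp only [sep_d2_act g hg]
  exact sep_pairing g hg D (d2 D) (d2 D)

lemma sep_J7_act (hg : gᵀ * g = 1) (D : T4) : J7 (act g D) = J7 D := by
  rw [J7, J7]
  simp only [sep_d2_act g hg, sepConjMul g hg]
  exact sep_pairing g hg D (d2 D * d2 D) (d2 D)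

end Inv3
noncomputable def d2v (l1 l2 l3 : ℝ) : Mat3 :=
  Matrix.of ![![4*l3^2+2*l2*l3+4*l2^2,0,0],![0,4*l3^2+2*l1*l3+4*l1^2,0],![0,0,4*l2^2+2*l1*l2+4*l1^2]]

lemma d2_eq (l1 l2 l3 : ℝ) : d2 (NForth l1 l2 l3) = d2v l1 l2 l3 := by
  rw [nf_eq]
  have : d2 (nfv l1 l2 l3) = Matrix.of fun j l => ∑ i, sqv l1 l2 l3 i j i l := by
    simp only [d2, sq_eq]
  rw [this]
  ext j l
  fin_cases j <;> fin_cases l <;>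
    simp [sqv, d2v, Fin.sum_univ_three, Matrix.vecHead, Matrix.vecTail] <;> ring

lemma J2val (l1 l2 l3 : ℝ) : J2 (NForth l1 l2 l3) =
    8*l3^2 + 2*l2*l3 + 8*l2^2 + 2*l1*l3 + 2*l1*l2 + 8*l1^2 := by
  rw [J2, d2_eq]
  simp [Matrix.trace, Matrix.diag, d2v, Fin.sum_univ_three, Matrix.vecHead, Matrix.vecTail]
  ring

set_option maxHeartbeats 2000000 in
lemma J3val (l1 l2 l3 : ℝ) : J3 (NForth l1 l2 l3) =
    -6*l2*l3^2 - 6*l2^2*l3 - 6*l1*l3^2 + 6*l1*l2*l3 - 6*l1*l2^2 - 6*l1^2*l3 - 6*l1^2*l2 := by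
  rw [J3, nf_eq]
  have : d3 (nfv l1 l2 l3) = Matrix.of fun j l => ∑ i, ∑ p, ∑ q,
      sqv l1 l2 l3 i j p q * nfv l1 l2 l3 p q i l := by
    simp only [d3, cbT, sq_eq]
  rw [this]
  simp [Matrix.trace, Matrix.diag, Fin.sum_univ_three, sqv, nfv,
    Matrix.vecHead, Matrix.vecTail]
  ring
lemma J4val (l1 l2 l3 : ℝ) : J4 (NForth l1 l2 l3) =
    32*l3^4 + 16*l2*l3^3 + 36*l2^2*l3^2 + 16*l2^3*l3 + 32*l2^4 + 16*l1*l3^3 + 16*l1*l2^3 +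
    36*l1^2*l3^2 + 36*l1^2*l2^2 + 16*l1^3*l3 + 16*l1^3*l2 + 32*l1^4 := by
  rw [J4, d2_eq]
  simp [Matrix.trace, Matrix.diag, Matrix.mul_apply, d2v, Fin.sum_univ_three,
    Matrix.vecHead, Matrix.vecTail]
  ring

set_option maxHeartbeats 1000000 in
lemma J6val (l1 l2 l3 : ℝ) : J6 (NForth l1 l2 l3) =
    128*l3^6 + 96*l2*l3^5 + 240*l2^2*l3^4 + 200*l2^3*l3^3 + 240*l2^4*l3^2 + 96*l2^5*l3 +
    128*l2^6 + 96*l1*l3^5 + 96*l1*l2^5 + 240*l1^2*l3^4 + 240*l1^2*l2^4 + 200*l1^3*l3^3 +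
    200*l1^3*l2^3 + 240*l1^4*l3^2 + 240*l1^4*l2^2 + 96*l1^5*l3 + 96*l1^5*l2 + 128*l1^6 := by
  rw [J6, d2_eq]
  simp [Matrix.trace, Matrix.diag, Matrix.mul_apply, d2v, Fin.sum_univ_three,
    Matrix.vecHead, Matrix.vecTail]
  ring

set_option maxHeartbeats 1000000 in
lemma J5val (l1 l2 l3 : ℝ) : J5 (NForth l1 l2 l3) =
    -16*l2*l3^4 - 20*l2^2*l3^3 - 20*l2^3*l3^2 - 16*l2^4*l3 - 16*l1*l3^4 + 8*l1*l2*l3^3 +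
    64*l1*l2^2*l3^2 + 8*l1*l2^3*l3 - 16*l1*l2^4 - 20*l1^2*l3^3 + 64*l1^2*l2*l3^2 +
    64*l1^2*l2^2*l3 - 20*l1^2*l2^3 - 20*l1^3*l3^2 + 8*l1^3*l2*l3 - 20*l1^3*l2^2 -
    16*l1^4*l3 - 16*l1^4*l2 := by
  rw [J5]
  simp only [d2_eq]
  simp only [nf_eq]
  simp [Fin.sum_univ_three, d2v, nfv, Matrix.vecHead, Matrix.vecTail]
  ring

set_option maxHeartbeats 2000000 in
lemma J7val (l1 l2 l3 : ℝ) : J7 (NForth l1 l2 l3) =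
    -64*l2*l3^6 - 128*l2^2*l3^5 - 312*l2^3*l3^4 - 312*l2^4*l3^3 - 128*l2^5*l3^2 - 64*l2^6*l3 -
    64*l1*l3^6 + 64*l1*l2*l3^5 + 232*l1*l2^2*l3^4 + 64*l1*l2^3*l3^3 + 232*l1*l2^4*l3^2 +
    64*l1*l2^5*l3 - 64*l1*l2^6 - 128*l1^2*l3^5 + 232*l1^2*l2*l3^4 + 416*l1^2*l2^2*l3^3 +
    416*l1^2*l2^3*l3^2 + 232*l1^2*l2^4*l3 - 128*l1^2*l2^5 - 312*l1^3*l3^4 + 64*l1^3*l2*l3^3 +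
    416*l1^3*l2^2*l3^2 + 64*l1^3*l2^3*l3 - 312*l1^3*l2^4 - 312*l1^4*l3^3 + 232*l1^4*l2*l3^2 +
    232*l1^4*l2^2*l3 - 312*l1^4*l2^3 - 128*l1^5*l3^2 + 64*l1^5*l2*l3 - 128*l1^5*l2^2 -
    64*l1^6*l3 - 64*l1^6*l2 := by
  rw [J7]
  simp only [d2_eq]
  simp only [nf_eq]
  simp [Fin.sum_univ_three, Matrix.mul_apply, d2v, nfv, Matrix.vecHead, Matrix.vecTail]
  ring
set_option maxRecDepth 10000 in
set_option maxHeartbeats 4000000 in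
lemma key_alg (l1 l2 l3 m1 m2 m3 j2 j3 j4 j5 j6 j7 : ℝ)
    (h2l : 8*l3^2 + 2*l2*l3 + 8*l2^2 + 2*l1*l3 + 2*l1*l2 + 8*l1^2 = j2)
    (h2m : 8*m3^2 + 2*m2*m3 + 8*m2^2 + 2*m1*m3 + 2*m1*m2 + 8*m1^2 = j2)
    (h3l : (-6)*l2*l3^2 - 6*l2^2*l3 - 6*l1*l3^2 + 6*l1*l2*l3 - 6*l1*l2^2 - 6*l1^2*l3 - 6*l1^2*l2 = j3)
    (h3m : (-6)*m2*m3^2 - 6*m2^2*m3 - 6*m1*m3^2 + 6*m1*m2*m3 - 6*m1*m2^2 - 6*m1^2*m3 - 6*m1^2*m2 = j3)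
    (h4l : 32*l3^4 + 16*l2*l3^3 + 36*l2^2*l3^2 + 16*l2^3*l3 + 32*l2^4 + 16*l1*l3^3 + 16*l1*l2^3 + 36*l1^2*l3^2 + 36*l1^2*l2^2 + 16*l1^3*l3 + 16*l1^3*l2 + 32*l1^4 = j4)
    (h4m : 32*m3^4 + 16*m2*m3^3 + 36*m2^2*m3^2 + 16*m2^3*m3 + 32*m2^4 + 16*m1*m3^3 + 16*m1*m2^3 + 36*m1^2*m3^2 + 36*m1^2*m2^2 + 16*m1^3*m3 + 16*m1^3*m2 + 32*m1^4 = j4)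
    (h5l : (-16)*l2*l3^4 - 20*l2^2*l3^3 - 20*l2^3*l3^2 - 16*l2^4*l3 - 16*l1*l3^4 + 8*l1*l2*l3^3 + 64*l1*l2^2*l3^2 + 8*l1*l2^3*l3 - 16*l1*l2^4 - 20*l1^2*l3^3 + 64*l1^2*l2*l3^2 + 64*l1^2*l2^2*l3 - 20*l1^2*l2^3 - 20*l1^3*l3^2 + 8*l1^3*l2*l3 - 20*l1^3*l2^2 - 16*l1^4*l3 - 16*l1^4*l2 = j5)
    (h5m : (-16)*m2*m3^4 - 20*m2^2*m3^3 - 20*m2^3*m3^2 - 16*m2^4*m3 - 16*m1*m3^4 + 8*m1*m2*m3^3 + 64*m1*m2^2*m3^2 + 8*m1*m2^3*m3 - 16*m1*m2^4 - 20*m1^2*m3^3 + 64*m1^2*m2*m3^2 + 64*m1^2*m2^2*m3 - 20*m1^2*m2^3 - 20*m1^3*m3^2 + 8*m1^3*m2*m3 - 20*m1^3*m2^2 - 16*m1^4*m3 - 16*m1^4*m2 = j5)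
    (h6l : 128*l3^6 + 96*l2*l3^5 + 240*l2^2*l3^4 + 200*l2^3*l3^3 + 240*l2^4*l3^2 + 96*l2^5*l3 + 128*l2^6 + 96*l1*l3^5 + 96*l1*l2^5 + 240*l1^2*l3^4 + 240*l1^2*l2^4 + 200*l1^3*l3^3 + 200*l1^3*l2^3 + 240*l1^4*l3^2 + 240*l1^4*l2^2 + 96*l1^5*l3 + 96*l1^5*l2 + 128*l1^6 = j6)
    (h6m : 128*m3^6 + 96*m2*m3^5 + 240*m2^2*m3^4 + 200*m2^3*m3^3 + 240*m2^4*m3^2 + 96*m2^5*m3 + 128*m2^6 + 96*m1*m3^5 + 96*m1*m2^5 + 240*m1^2*m3^4 + 240*m1^2*m2^4 + 200*m1^3*m3^3 + 200*m1^3*m2^3 + 240*m1^4*m3^2 + 240*m1^4*m2^2 + 96*m1^5*m3 + 96*m1^5*m2 + 128*m1^6 = j6)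
    (h7l : (-64)*l2*l3^6 - 128*l2^2*l3^5 - 312*l2^3*l3^4 - 312*l2^4*l3^3 - 128*l2^5*l3^2 - 64*l2^6*l3 - 64*l1*l3^6 + 64*l1*l2*l3^5 + 232*l1*l2^2*l3^4 + 64*l1*l2^3*l3^3 + 232*l1*l2^4*l3^2 + 64*l1*l2^5*l3 - 64*l1*l2^6 - 128*l1^2*l3^5 + 232*l1^2*l2*l3^4 + 416*l1^2*l2^2*l3^3 + 416*l1^2*l2^3*l3^2 + 232*l1^2*l2^4*l3 - 128*l1^2*l2^5 - 312*l1^3*l3^4 + 64*l1^3*l2*l3^3 + 416*l1^3*l2^2*l3^2 + 64*l1^3*l2^3*l3 - 312*l1^3*l2^4 - 312*l1^4*l3^3 + 232*l1^4*l2*l3^2 + 232*l1^4*l2^2*l3 - 312*l1^4*l2^3 - 128*l1^5*l3^2 + 64*l1^5*l2*l3 - 128*l1^5*l2^2 - 64*l1^6*l3 - 64*l1^6*l2 = j7)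
    (h7m : (-64)*m2*m3^6 - 128*m2^2*m3^5 - 312*m2^3*m3^4 - 312*m2^4*m3^3 - 128*m2^5*m3^2 - 64*m2^6*m3 - 64*m1*m3^6 + 64*m1*m2*m3^5 + 232*m1*m2^2*m3^4 + 64*m1*m2^3*m3^3 + 232*m1*m2^4*m3^2 + 64*m1*m2^5*m3 - 64*m1*m2^6 - 128*m1^2*m3^5 + 232*m1^2*m2*m3^4 + 416*m1^2*m2^2*m3^3 + 416*m1^2*m2^3*m3^2 + 232*m1^2*m2^4*m3 - 128*m1^2*m2^5 - 312*m1^3*m3^4 + 64*m1^3*m2*m3^3 + 416*m1^3*m2^2*m3^2 + 64*m1^3*m2^3*m3 - 312*m1^3*m2^4 - 312*m1^4*m3^3 + 232*m1^4*m2*m3^2 + 232*m1^4*m2^2*m3 - 312*m1^4*m2^3 - 128*m1^5*m3^2 + 64*m1^5*m2*m3 - 128*m1^5*m2^2 - 64*m1^6*m3 - 64*m1^6*m2 = j7)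
    (hΔ : (l1-l2)*(l1-l3)*(l2-l3) ≠ 0) :
    (m1 = l1 ∧ m2 = l2 ∧ m3 = l3) ∨ (m1 = l1 ∧ m2 = l3 ∧ m3 = l2) ∨
    (m1 = l2 ∧ m2 = l1 ∧ m3 = l3) ∨ (m1 = l2 ∧ m2 = l3 ∧ m3 = l1) ∨
    (m1 = l3 ∧ m2 = l1 ∧ m3 = l2) ∨ (m1 = l3 ∧ m2 = l2 ∧ m3 = l1) := by
  have hgl : 432*((l1-l2)*(l1-l3)*(l2-l3))^2 = 6*j6 - 9*j2*j4 - 20*j3^2 + 3*j2^3 := by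
    linear_combination 6*h6l - 9*(32*l3^4 + 16*l2*l3^3 + 36*l2^2*l3^2 + 16*l2^3*l3 + 32*l2^4 + 16*l1*l3^3 + 16*l1*l2^3 + 36*l1^2*l3^2 + 36*l1^2*l2^2 + 16*l1^3*l3 + 16*l1^3*l2 + 32*l1^4)*h2l - 9*j2*h4l - 20*(((-6)*l2*l3^2 - 6*l2^2*l3 - 6*l1*l3^2 + 6*l1*l2*l3 - 6*l1*l2^2 - 6*l1^2*l3 - 6*l1^2*l2)+j3)*h3l + 3*((8*l3^2 + 2*l2*l3 + 8*l2^2 + 2*l1*l3 + 2*l1*l2 + 8*l1^2)^2+(8*l3^2 + 2*l2*l3 + 8*l2^2 + 2*l1*l3 + 2*l1*l2 + 8*l1^2)*j2+j2^2)*h2l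
  have hgm : 432*((m1-m2)*(m1-m3)*(m2-m3))^2 = 6*j6 - 9*j2*j4 - 20*j3^2 + 3*j2^3 := by
    linear_combination 6*h6m - 9*(32*m3^4 + 16*m2*m3^3 + 36*m2^2*m3^2 + 16*m2^3*m3 + 32*m2^4 + 16*m1*m3^3 + 16*m1*m2^3 + 36*m1^2*m3^2 + 36*m1^2*m2^2 + 16*m1^3*m3 + 16*m1^3*m2 + 32*m1^4)*h2m - 9*j2*h4m - 20*(((-6)*m2*m3^2 - 6*m2^2*m3 - 6*m1*m3^2 + 6*m1*m2*m3 - 6*m1*m2^2 - 6*m1^2*m3 - 6*m1^2*m2)+j3)*h3m + 3*((8*m3^2 + 2*m2*m3 + 8*m2^2 + 2*m1*m3 + 2*m1*m2 + 8*m1^2)^2+(8*m3^2 + 2*m2*m3 + 8*m2^2 + 2*m1*m3 + 2*m1*m2 + 8*m1^2)*j2+j2^2)*h2m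
  have hΔsq : ((l1-l2)*(l1-l3)*(l2-l3))^2 = ((m1-m2)*(m1-m3)*(m2-m3))^2 := by
    linear_combination (hgl - hgm) / 432
  have hne : ((l1-l2)*(l1-l3)*(l2-l3))^2 ≠ 0 := pow_ne_zero 2 hΔ
  have hΔm : (m1-m2)*(m1-m3)*(m2-m3) ≠ 0 := by
    intro h
    apply hne
    rw [hΔsq, h]
    ring
  have hxl : 96*(l1+l2+l3)*((l1-l2)*(l1-l3)*(l2-l3))^2
      = -3*j7 + 3*j2*j5 - 3*j3*j4 + j2^2*j3 := by
    linear_combination (-3)*h7l + 3*((-16)*l2*l3^4 - 20*l2^2*l3^3 - 20*l2^3*l3^2 - 16*l2^4*l3 - 16*l1*l3^4 + 8*l1*l2*l3^3 + 64*l1*l2^2*l3^2 + 8*l1*l2^3*l3 - 16*l1*l2^4 - 20*l1^2*l3^3 + 64*l1^2*l2*l3^2 + 64*l1^2*l2^2*l3 - 20*l1^2*l2^3 - 20*l1^3*l3^2 + 8*l1^3*l2*l3 - 20*l1^3*l2^2 - 16*l1^4*l3 - 16*l1^4*l2)*h2l + 3*j2*h5l - 3*(32*l3^4 + 16*l2*l3^3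 + 36*l2^2*l3^2 + 16*l2^3*l3 + 32*l2^4 + 16*l1*l3^3 + 16*l1*l2^3 + 36*l1^2*l3^2 + 36*l1^2*l2^2 + 16*l1^3*l3 + 16*l1^3*l2 + 32*l1^4)*h3l - 3*j3*h4l + ((8*l3^2 + 2*l2*l3 + 8*l2^2 + 2*l1*l3 + 2*l1*l2 + 8*l1^2)^2)*h3l + j3*((8*l3^2 + 2*l2*l3 + 8*l2^2 + 2*l1*l3 + 2*l1*l2 + 8*l1^2)+j2)*h2l
  have hxm : 96*(m1+m2+m3)*((m1-m2)*(m1-m3)*(m2-m3))^2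
      = -3*j7 + 3*j2*j5 - 3*j3*j4 + j2^2*j3 := by
    linear_combination (-3)*h7m + 3*((-16)*m2*m3^4 - 20*m2^2*m3^3 - 20*m2^3*m3^2 - 16*m2^4*m3 - 16*m1*m3^4 + 8*m1*m2*m3^3 + 64*m1*m2^2*m3^2 + 8*m1*m2^3*m3 - 16*m1*m2^4 - 20*m1^2*m3^3 + 64*m1^2*m2*m3^2 + 64*m1^2*m2^2*m3 - 20*m1^2*m2^3 - 20*m1^3*m3^2 + 8*m1^3*m2*m3 - 20*m1^3*m2^2 - 16*m1^4*m3 - 16*m1^4*m2)*h2m + 3*j2*h5m - 3*(32*m3^4 + 16*m2*m3^3 + 36*m2^2*m3^2 + 16*m2^3*m3 + 32*m2^4 + 16*m1*m3^3 + 16*m1*m2^3 + 36*m1^2*m3^2 + 36*m1^2*m2^2 + 16*m1^3*m3 + 16*m1^3*m2 + 32*m1^4)*h3m - 3*j3*h4m + ((8*m3^2 + 2*m2*m3 + 8*m2^2 + 2*m1*m3 + 2*m1*m2 + 8*m1^2)^2)*h3m + j3*((8*m3^2 + 2*m2*m3 + 8*m2^2 + 2*m1*m3 + 2*m1*m2 +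 8*m1^2)+j2)*h2m
  rw [← hΔsq] at hxm
  have hxl' : 96*(l1+l2+l3)*((l1-l2)*(l1-l3)*(l2-l3))^2
      = 96*(m1+m2+m3)*((l1-l2)*(l1-l3)*(l2-l3))^2 := by rw [hxl, hxm]
  have he1 : l1+l2+l3 = m1+m2+m3 := by
    have := mul_right_cancel₀ hne hxl'
    linarith
  have he2 : l1*l2+l1*l3+l2*l3 = m1*m2+m1*m3+m2*m3 := by
    linear_combination (8*(l1+l2+l3+m1+m2+m3)*he1 - h2l + h2m)/14
  have he3 : l1*l2*l3 = m1*m2*m3 := by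
    linear_combination (h3l - h3m)/24 + ((l1*l2+l1*l3+l2*l3)*he1 + (m1+m2+m3)*he2)/4
  have hr : ∀ x : ℝ, (x-m1)*((x-m2)*(x-m3)) = 0 → (x-l1)*((x-l2)*(x-l3)) = 0 := by
    intro x hx
    have h : (x-l1)*((x-l2)*(x-l3)) = (x-m1)*((x-m2)*(x-m3)) := by
      linear_combination (-(x^2))*he1 + x*he2 - he3
    rw [h, hx]
  have root : ∀ y : ℝ, (y-m1)*((y-m2)*(y-m3)) = 0 → y = l1 ∨ y = l2 ∨ y = l3 := by
    intro y hy
    have := hr y hy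
    rcases mul_eq_zero.mp this with h | h
    · left; linarith [sub_eq_zero.mp h]
    · rcases mul_eq_zero.mp h with h | h
      · right; left; linarith [sub_eq_zero.mp h]
      · right; right; linarith [sub_eq_zero.mp h]
  have hm1 := root m1 (by ring)
  have hm2 := root m2 (by ring)
  have hm3 := root m3 (by ring)
  have h12 : m1 ≠ m2 := fun h => hΔm (by rw [h]; ring)
  have h13 : m1 ≠ m3 := fun h => hΔm (by rw [h]; ring)
  have h23 : m2 ≠ m3 := fun h => hΔm (by rw [h]; ring)
  rcases hm1 with h1 | h1 | h1 <;> rcases hm2 with h2 | h2 | h2 <;> rcases hm3 with h3 | h3 | h3 <;>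
    first
      | (exact absurd (h1.trans h2.symm) h12)
      | (exact absurd (h1.trans h3.symm) h13)
      | (exact absurd (h2.trans h3.symm) h23)
      | tauto
noncomputable def mA : Mat3 := Matrix.of ![![0,1,0],![0,0,1],![1,0,0]]
noncomputable def mS : Mat3 := Matrix.of ![![0,1,0],![1,0,0],![0,0,-1]]

lemma mA_SO3 : IsSO3 mA := by
  constructor
  · ext i j
    fin_cases i <;> fin_cases j <;>
      simp [mA, Matrix.mul_apply, Matrix.one_apply, Matrix.transpose_apply,
        Fin.sum_univ_three, Matrix.vecHead, Matrix.vecTail]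
  · simp [mA, Matrix.det_fin_three]

lemma mS_SO3 : IsSO3 mS := by
  constructor
  · ext i j
    fin_cases i <;> fin_cases j <;>
      simp [mS, Matrix.mul_apply, Matrix.one_apply, Matrix.transpose_apply,
        Fin.sum_univ_three, Matrix.vecHead, Matrix.vecTail]
  · simp [mS, Matrix.det_fin_three]

set_option maxHeartbeats 1000000 in
lemma permA (l1 l2 l3 : ℝ) : act mA (NForth l1 l2 l3) = NForth l2 l3 l1 := by
  rw [nf_eq, nf_eq]
  funext i j k l
  fin_cases i <;> fin_cases j <;> fin_cases k <;> fin_cases l <;>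
    (simp [act, mA, Fin.sum_univ_three, nfv, Matrix.vecHead, Matrix.vecTail]; try ring)

set_option maxHeartbeats 1000000 in
lemma permS (l1 l2 l3 : ℝ) : act mS (NForth l1 l2 l3) = NForth l2 l1 l3 := by
  rw [nf_eq, nf_eq]
  funext i j k l
  fin_cases i <;> fin_cases j <;> fin_cases k <;> fin_cases l <;>
    (simp [act, mS, Fin.sum_univ_three, nfv, Matrix.vecHead, Matrix.vecTail]; try ring)

lemma so3_one : IsSO3 (1 : Mat3) := ⟨by simp, by simp⟩

lemma so3_mul {a b : Mat3} (ha : IsSO3 a) (hb : IsSO3 b) : IsSO3 (a * b) := by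
  refine ⟨?_, by rw [Matrix.det_mul, ha.2, hb.2, one_mul]⟩
  rw [Matrix.transpose_mul, show a * b * (bᵀ * aᵀ) = a * (b * bᵀ) * aᵀ by
    simp only [Matrix.mul_assoc], hb.1, Matrix.mul_one, ha.1]

lemma so3_transpose {a : Mat3} (ha : IsSO3 a) : IsSO3 aᵀ := by
  refine ⟨?_, by rw [Matrix.det_transpose]; exact ha.2⟩
  rw [Matrix.transpose_transpose]
  exact mul_eq_one_comm.mp ha.1

set_option maxHeartbeats 1000000 in
lemma exists_perm (l1 l2 l3 m1 m2 m3 : ℝ)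
    (hperm : (m1 = l1 ∧ m2 = l2 ∧ m3 = l3) ∨ (m1 = l1 ∧ m2 = l3 ∧ m3 = l2) ∨
      (m1 = l2 ∧ m2 = l1 ∧ m3 = l3) ∨ (m1 = l2 ∧ m2 = l3 ∧ m3 = l1) ∨
      (m1 = l3 ∧ m2 = l1 ∧ m3 = l2) ∨ (m1 = l3 ∧ m2 = l2 ∧ m3 = l1)) :
    ∃ h0 : Mat3, IsSO3 h0 ∧ act h0 (NForth l1 l2 l3) = NForth m1 m2 m3 := by
  rcases hperm with ⟨h1, h2, h3⟩ | ⟨h1, h2, h3⟩ | ⟨h1, h2, h3⟩ | ⟨h1, h2, h3⟩ |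
    ⟨h1, h2, h3⟩ | ⟨h1, h2, h3⟩ <;> rw [h1, h2, h3]
  · exact ⟨1, so3_one, sep_act_one _⟩
  · refine ⟨mA * mS, so3_mul mA_SO3 mS_SO3, ?_⟩
    rw [← sep_act_comp, permS, permA]
  · exact ⟨mS, mS_SO3, permS l1 l2 l3⟩
  · exact ⟨mA, mA_SO3, permA l1 l2 l3⟩
  · refine ⟨mA * mA, so3_mul mA_SO3 mA_SO3, ?_⟩
    rw [← sep_act_comp, permA, permA]
  · refine ⟨mA * (mA * mS), so3_mul mA_SO3 (so3_mul mA_SO3 mS_SO3), ?_⟩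
    rw [← sep_act_comp, ← sep_act_comp, permS, permA, permA]

/-- the invariants `J₂,…,J₇` separate the `SO(3)`-orbits inside the
orthotropic class of `H⁴` (under the genericity condition
`6J₆ − 9J₂J₄ − 20J₃² + 3J₂³ ≠ 0` for both tensors). -/
theorem invariants_separate_orbits_orthotropic (D D' : T4)
    (hD : IsHarm D) (hD' : IsHarm D')
    (hstrat : ∃ (g : Mat3) (l1 l2 l3 : ℝ), IsSO3 g ∧ act g D = NForth l1 l2 l3)
    (hstrat' : ∃ (g' : Mat3) (l1' l2' l3' : ℝ), IsSO3 g' ∧ act g' D' = NForth l1' l2' l3')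
    (hgen : 6 * J6 D - 9 * J2 D * J4 D - 20 * (J3 D) ^ 2 + 3 * (J2 D) ^ 3 ≠ 0)
    (hgen' : 6 * J6 D' - 9 * J2 D' * J4 D' - 20 * (J3 D') ^ 2 + 3 * (J2 D') ^ 3 ≠ 0)
    (hJ : J2 D = J2 D' ∧ J3 D = J3 D' ∧ J4 D = J4 D' ∧ J5 D = J5 D' ∧
          J6 D = J6 D' ∧ J7 D = J7 D') :
    ∃ h : Mat3, IsSO3 h ∧ D' = act h D := by
  obtain ⟨g, l1, l2, l3, hgSO, hgD⟩ := hstrat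
  obtain ⟨g', m1, m2, m3, hgSO', hgD'⟩ := hstrat'
  obtain ⟨hJ2, hJ3, hJ4, hJ5, hJ6, hJ7⟩ := hJ
  have hg1 : gᵀ * g = 1 := mul_eq_one_comm.mp hgSO.1
  have hg1' : g'ᵀ * g' = 1 := mul_eq_one_comm.mp hgSO'.1
  -- transfer the invariants to the normal forms
  have t2 : J2 D = J2 (NForth l1 l2 l3) := by rw [← hgD]; exact (sep_J2_act g hg1 D).symm
  have t3 : J3 D = J3 (NForth l1 l2 l3) := by rw [← hgD]; exact (sep_J3_act g hg1 D).symm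
  have t4 : J4 D = J4 (NForth l1 l2 l3) := by rw [← hgD]; exact (sep_J4_act g hg1 D).symm
  have t5 : J5 D = J5 (NForth l1 l2 l3) := by rw [← hgD]; exact (sep_J5_act g hg1 D).symm
  have t6 : J6 D = J6 (NForth l1 l2 l3) := by rw [← hgD]; exact (sep_J6_act g hg1 D).symm
  have t7 : J7 D = J7 (NForth l1 l2 l3) := by rw [← hgD]; exact (sep_J7_act g hg1 D).symm
  have u2 : J2 D' = J2 (NForth m1 m2 m3) := by rw [← hgD']; exact (sep_J2_act g' hg1' D').symm
  have u3 : J3 D' = J3 (NForth m1 m2 m3) := by rw [← hgD']; exact (sep_J3_act g' hg1' D').symm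
  have u4 : J4 D' = J4 (NForth m1 m2 m3) := by rw [← hgD']; exact (sep_J4_act g' hg1' D').symm
  have u5 : J5 D' = J5 (NForth m1 m2 m3) := by rw [← hgD']; exact (sep_J5_act g' hg1' D').symm
  have u6 : J6 D' = J6 (NForth m1 m2 m3) := by rw [← hgD']; exact (sep_J6_act g' hg1' D').symm
  have u7 : J7 D' = J7 (NForth m1 m2 m3) := by rw [← hgD']; exact (sep_J7_act g' hg1' D').symm
  -- genericity gives distinct lambdas
  have hΔ : (l1-l2)*(l1-l3)*(l2-l3) ≠ 0 := by
    intro h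
    apply hgen
    have : 6 * J6 D - 9 * J2 D * J4 D - 20 * (J3 D) ^ 2 + 3 * (J2 D) ^ 3
        = 432*((l1-l2)*(l1-l3)*(l2-l3))^2 := by
      rw [t2, t3, t4, t6, J2val, J3val, J4val, J6val]
      ring
    rw [this, h]
    ring
  -- apply the separation lemma
  have hperm := key_alg l1 l2 l3 m1 m2 m3 (J2 D) (J3 D) (J4 D) (J5 D) (J6 D) (J7 D)
    (by rw [t2, J2val]) (by rw [hJ2, u2, J2val])
    (by rw [t3, J3val]) (by rw [hJ3, u3, J3val])
    (by rw [t4, J4val]) (by rw [hJ4, u4, J4val])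
    (by rw [t5, J5val]) (by rw [hJ5, u5, J5val])
    (by rw [t6, J6val]) (by rw [hJ6, u6, J6val])
    (by rw [t7, J7val]) (by rw [hJ7, u7, J7val])
    hΔ
  obtain ⟨h0, h0SO, h0NF⟩ := exists_perm l1 l2 l3 m1 m2 m3 hperm
  refine ⟨g'ᵀ * (h0 * g), so3_mul (so3_transpose hgSO') (so3_mul h0SO hgSO), ?_⟩
  calc D' = act 1 D' := (sep_act_one D').symm
    _ = act (g'ᵀ * g') D' := by rw [hg1']
    _ = act g'ᵀ (act g' D') := (sep_act_comp g'ᵀ g' D').symm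
    _ = act g'ᵀ (NForth m1 m2 m3) := by rw [hgD']
    _ = act g'ᵀ (act h0 (NForth l1 l2 l3)) := by rw [h0NF]
    _ = act g'ᵀ (act h0 (act g D)) := by rw [hgD]
    _ = act g'ᵀ (act (h0 * g) D) := by rw [sep_act_comp h0 g D]
    _ = act (g'ᵀ * (h0 * g)) D := sep_act_comp g'ᵀ (h0 * g) D
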